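/- arXiv:1806.10959 — 2 statements merged into one kernel-verified Lean document; each statement's English description precedes it below -/
import Mathlib

section
/- For every integer r ≥ 2, every probability vector Ξ = (Ξ₁,…,Ξ_r), every real α > −1, every x ∈ [0,1], and all real y and d, one has F₁(y − d; x, Ξ) = F₁(y; x, Ξ) − F₂(y, d; Ξ). -/
open Finset

/-- `g(y; l, r) = ∑_{i=l}^{r} C(r,i) y^i (1−y)^{r−i}`. -/
noncomputable def g (r l : ℕ) (y : ℝ) : ℝ :=
  ∑ i ∈ Finset.Icc l r, (r.choose i : ℝ) * y ^ i * (1 - y) ^ (r - i)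

/-- `F₁(y; x, l, r) = g(y; l, r) − (2+α)y + x(1+α)`. -/
noncomputable def F1 (r l : ℕ) (α x y : ℝ) : ℝ :=
  g r l y - (2 + α) * y + x * (1 + α)

/-- `h(y, d; l, r) = ∑_{j=0}^{l−1} ∑_{i=l}^{r} C(r,i) C(i,j) (y−d)^j d^{i−j} (1−y)^{r−i}`. -/
noncomputable def h (r l : ℕ) (y d : ℝ) : ℝ :=
  ∑ j ∈ Finset.range l, ∑ i ∈ Finset.Icc l r,
    (r.choose i : ℝ) * (i.choose j : ℝ) * (y - d) ^ j * d ^ (i - j) * (1 - y) ^ (r - i)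

/-- `F₂(y, d; l, r) = h(y, d; l, r) − (2+α)d`. -/
noncomputable def F2 (r l : ℕ) (α y d : ℝ) : ℝ :=
  h r l y d - (2 + α) * d

/-- `F₁(y; x, Ξ) = ∑_{l=1}^{r} Ξ_l F₁(y; x, l, r)`. -/
noncomputable def F1Xi (r : ℕ) (Ξ : ℕ → ℝ) (α x y : ℝ) : ℝ :=
  ∑ l ∈ Finset.Icc 1 r, Ξ l * F1 r l α x y

/-- `F₂(y, d; Ξ) = ∑_{l=1}^{r} Ξ_l F₂(y, d; l, r)`. -/
noncomputable def F2Xi (r : ℕ) (Ξ : ℕ → ℝ) (α y d : ℝ) : ℝ :=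
  ∑ l ∈ Finset.Icc 1 r, Ξ l * F2 r l α y d


lemma key_aux (r l : ℕ) (y d : ℝ) :
    (∑ i ∈ Finset.Icc l r, (r.choose i : ℝ) * (y-d) ^ i * (1 - (y-d)) ^ (r - i))
    = ∑ i ∈ Finset.Icc l r, ∑ j ∈ Finset.Icc l i,
      (r.choose i : ℝ) * (i.choose j : ℝ) * (y - d) ^ j * d ^ (i - j) * (1 - y) ^ (r - i) := by
  have hswap : (∑ i ∈ Finset.Icc l r, ∑ j ∈ Finset.Icc l i,
      (r.choose i : ℝ) * (i.choose j : ℝ) * (y - d) ^ j * d ^ (i - j) * (1 - y) ^ (r - i))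
      = ∑ j ∈ Finset.Icc l r, ∑ i ∈ Finset.Icc j r,
      (r.choose i : ℝ) * (i.choose j : ℝ) * (y - d) ^ j * d ^ (i - j) * (1 - y) ^ (r - i) := by
    simp only [← Finset.Ico_add_one_right_eq_Icc]
    rw [Finset.sum_Ico_Ico_comm l (r+1)]
  rw [hswap]
  refine Finset.sum_congr rfl fun j hj => ?_
  obtain ⟨hlj, hjr⟩ := Finset.mem_Icc.mp hj
  have hexp : (1 - (y - d)) ^ (r - j) = ∑ k ∈ range (r - j + 1),
      d ^ k * (1 - y) ^ (r - j - k) * ((r-j).choose k : ℝ) := by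
    rw [← add_pow]; ring_nf
  rw [hexp, Finset.mul_sum, ← Finset.Ico_add_one_right_eq_Icc, Finset.sum_Ico_eq_sum_range]
  have hn : r + 1 - j = r - j + 1 := by omega
  rw [hn]
  refine Finset.sum_congr rfl fun k hk => ?_
  have hk' : k ≤ r - j := Nat.lt_succ_iff.mp (Finset.mem_range.mp hk)
  have hch : (r.choose (j + k)) * ((j+k).choose j) = (r.choose j) * ((r-j).choose k) := by
    have := Nat.choose_mul (n := r) (k := j + k) (s := j) (by omega)
    have h2 : j + k - j = k := by omega
    rw [h2] at this; exact this
  have h3 : j + k - j = k := by omega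
  have h4 : r - (j + k) = r - j - k := by omega
  rw [h3, h4]
  have hch' : (r.choose (j + k) : ℝ) * ((j+k).choose j : ℝ) = (r.choose j : ℝ) * ((r-j).choose k : ℝ) := by
    exact_mod_cast congrArg (Nat.cast : ℕ → ℝ) hch
  linear_combination (-((y - d) ^ j) * d ^ k * (1 - y) ^ (r - j - k)) * hch'

lemma key_aux2 (r l : ℕ) (y d : ℝ) :
    (∑ i ∈ Finset.Icc l r, (r.choose i : ℝ) * y ^ i * (1 - y) ^ (r - i))
    = (∑ j ∈ Finset.range l, ∑ i ∈ Finset.Icc l r,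
        (r.choose i : ℝ) * (i.choose j : ℝ) * (y - d) ^ j * d ^ (i - j) * (1 - y) ^ (r - i))
      + ∑ i ∈ Finset.Icc l r, ∑ j ∈ Finset.Icc l i,
        (r.choose i : ℝ) * (i.choose j : ℝ) * (y - d) ^ j * d ^ (i - j) * (1 - y) ^ (r - i) := by
  have hterm : ∀ i ∈ Finset.Icc l r, (r.choose i : ℝ) * y ^ i * (1 - y) ^ (r - i)
      = (∑ j ∈ Finset.range l, (r.choose i : ℝ) * (i.choose j : ℝ) * (y - d) ^ j * d ^ (i - j) * (1 - y) ^ (r - i))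
        + ∑ j ∈ Finset.Icc l i, (r.choose i : ℝ) * (i.choose j : ℝ) * (y - d) ^ j * d ^ (i - j) * (1 - y) ^ (r - i) := by
    intro i hi
    obtain ⟨hli, hir⟩ := Finset.mem_Icc.mp hi
    have hb : y ^ i = ∑ j ∈ range (i+1), (y - d) ^ j * d ^ (i - j) * (i.choose j : ℝ) := by
      rw [← add_pow]; ring_nf
    rw [hb, Finset.mul_sum, Finset.sum_mul]
    rw [range_eq_Ico, ← Finset.sum_Ico_consecutive _ (Nat.zero_le l) (by omega : l ≤ i + 1),
      Finset.Ico_add_one_right_eq_Icc, ← range_eq_Ico]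
    congr 1 <;> exact Finset.sum_congr rfl fun j hj => by ring
  rw [Finset.sum_congr rfl hterm, Finset.sum_add_distrib, Finset.sum_comm]

lemma g_sub_eq (r l : ℕ) (y d : ℝ) : g r l (y - d) = g r l y - h r l y d := by
  unfold g h
  rw [key_aux, key_aux2 r l y d]
  ring

theorem stmt_7 (r : ℕ) (hr : 2 ≤ r)
    (Ξ : ℕ → ℝ) (hΞnn : ∀ l, 0 ≤ Ξ l) (hΞsum : ∑ l ∈ Finset.Icc 1 r, Ξ l = 1)
    (α : ℝ) (hα : -1 < α) (x : ℝ) (hx : x ∈ Set.Icc (0 : ℝ) 1) (y d : ℝ) :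
    F1Xi r Ξ α x (y - d) = F1Xi r Ξ α x y - F2Xi r Ξ α y d := by
  unfold F1Xi F2Xi F1 F2
  rw [← Finset.sum_sub_distrib]
  refine Finset.sum_congr rfl fun l hl => ?_
  rw [g_sub_eq]
  ring
end

section
/- Fix an integer r ≥ 2, a probability vector Ξ, a real α > −1 and x ∈ [0,1]. (i) If y_i and y_j are real numbers with F₁(y_i; x, Ξ) = 0 and F₁(y_j; x, Ξ) = 0, then F₂(y_i, y_i − y_j; Ξ) = 0. (ii) Conversely, if F₁(y; x, Ξ) = 0 and F₂(y, d; Ξ) = 0, then F₁(y − d; x, Ξ) = 0. -/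
open Finset

lemma stmt8_inner_sum (r j : ℕ) (hj : j ≤ r) (d u : ℝ) :
    ∑ i ∈ Finset.Icc j r, (r.choose i : ℝ) * (i.choose j : ℝ) * d ^ (i - j) * u ^ (r - i)
      = (r.choose j : ℝ) * (d + u) ^ (r - j) := by
  rw [add_pow, Finset.mul_sum]
  rw [show Finset.Icc j r = Finset.Ico j (r+1) by rfl, Finset.sum_Ico_eq_sum_range]
  rw [show r + 1 - j = (r - j) + 1 by omega]
  apply Finset.sum_congr rfl
  intro k hk
  simp only [Finset.mem_range] at hk
  have h1 : (r.choose (j+k) : ℝ) * ((j+k).choose j : ℝ)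
      = (r.choose j : ℝ) * ((r-j).choose k : ℝ) := by
    have := Nat.choose_mul (n := r) (show j ≤ j + k by omega)
    rw [Nat.add_sub_cancel_left] at this
    exact_mod_cast this
  have e1 : j + k - j = k := by omega
  have e2 : r - (j + k) = r - j - k := by omega
  rw [e1, e2]
  calc (r.choose (j+k) : ℝ) * ((j+k).choose j : ℝ) * d ^ k * u ^ (r-j-k)
      = (r.choose j : ℝ) * ((r-j).choose k : ℝ) * d ^ k * u ^ (r-j-k) := by rw [h1]
    _ = (r.choose j : ℝ) * (d ^ k * u ^ (r-j-k) * ((r-j).choose k : ℝ)) := by ring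

lemma stmt8_key (r l : ℕ) (y d : ℝ) :
    g r l y = h r l y d + g r l (y - d) := by
  have expand : ∀ i ∈ Finset.Icc l r,
      (r.choose i : ℝ) * y ^ i * (1 - y) ^ (r - i)
        = (∑ j ∈ Finset.range l,
            (r.choose i : ℝ) * (i.choose j : ℝ) * (y - d) ^ j * d ^ (i - j) * (1 - y) ^ (r - i))
          + ∑ j ∈ Finset.Ico l (i+1),
            (r.choose i : ℝ) * (i.choose j : ℝ) * (y - d) ^ j * d ^ (i - j) * (1 - y) ^ (r - i) := by
    intro i hi
    simp only [Finset.mem_Icc] at hi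
    have hy : y ^ i = ((y - d) + d) ^ i := by ring_nf
    rw [hy, add_pow, Finset.mul_sum, Finset.sum_mul]
    rw [Finset.range_eq_Ico, ← Finset.sum_Ico_consecutive _ (Nat.zero_le l) (by omega : l ≤ i + 1),
      ← Finset.range_eq_Ico]
    congr 1 <;> apply Finset.sum_congr rfl <;> intro j hj <;> ring
  rw [g, Finset.sum_congr rfl expand, Finset.sum_add_distrib]
  congr 1
  · rw [h, Finset.sum_comm]
  · rw [Finset.sum_comm' (s' := fun j => Finset.Icc j r) (t' := Finset.Icc l r)
      (by intro i j; simp only [Finset.mem_Icc, Finset.mem_Ico]; omega)]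
    rw [g]
    apply Finset.sum_congr rfl
    intro j hj
    simp only [Finset.mem_Icc] at hj
    have hinner := stmt8_inner_sum r j hj.2 d (1 - y)
    calc ∑ i ∈ Finset.Icc j r,
          (r.choose i : ℝ) * (i.choose j : ℝ) * (y - d) ^ j * d ^ (i - j) * (1 - y) ^ (r - i)
        = (y - d) ^ j * ∑ i ∈ Finset.Icc j r,
            (r.choose i : ℝ) * (i.choose j : ℝ) * d ^ (i - j) * (1 - y) ^ (r - i) := by
          rw [Finset.mul_sum]; apply Finset.sum_congr rfl; intro i _; ring
      _ = (y - d) ^ j * ((r.choose j : ℝ) * (d + (1 - y)) ^ (r - j)) := by rw [hinner]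
      _ = (r.choose j : ℝ) * (y - d) ^ j * (1 - (y - d)) ^ (r - j) := by ring_nf

lemma stmt8_F2_eq (r l : ℕ) (α x y d : ℝ) :
    F2 r l α y d = F1 r l α x y - F1 r l α x (y - d) := by
  have := stmt8_key r l y d
  simp only [F1, F2]
  rw [this]
  ring

lemma stmt8_F2Xi_eq (r : ℕ) (Ξ : ℕ → ℝ) (α x y d : ℝ) :
    F2Xi r Ξ α y d = F1Xi r Ξ α x y - F1Xi r Ξ α x (y - d) := by
  simp only [F2Xi, F1Xi, ← Finset.sum_sub_distrib]
  apply Finset.sum_congr rfl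
  intro l _
  rw [stmt8_F2_eq r l α x y d]
  ring

theorem stmt_8 (r : ℕ) (hr : 2 ≤ r)
    (Ξ : ℕ → ℝ) (hΞnn : ∀ l, 0 ≤ Ξ l) (hΞsum : ∑ l ∈ Finset.Icc 1 r, Ξ l = 1)
    (α : ℝ) (hα : -1 < α) (x : ℝ) (hx : x ∈ Set.Icc (0 : ℝ) 1) :
    (∀ yi yj : ℝ, F1Xi r Ξ α x yi = 0 → F1Xi r Ξ α x yj = 0 →
      F2Xi r Ξ α yi (yi - yj) = 0) ∧
    (∀ y d : ℝ, F1Xi r Ξ α x y = 0 → F2Xi r Ξ α y d = 0 →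
      F1Xi r Ξ α x (y - d) = 0) := by
  constructor
  · intro yi yj h1 h2
    rw [stmt8_F2Xi_eq r Ξ α x, show yi - (yi - yj) = yj by ring, h1, h2, sub_zero]
  · intro y d h1 h2
    rw [stmt8_F2Xi_eq r Ξ α x, h1, zero_sub, neg_eq_zero] at h2
    exact h2
end
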